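/- Fix a real number p > 1 and define λ : ℕ → ℝ by λ(1) = 1/(p(p-1)) and λ(n) = λ(n-1)/(p^{⌊n/2⌋+1} - 1) for n ≥ 2. Then the series ∑_{n≥1} λ(n) converges and equals (∏_{k≥2}(1 - p^{-k}))^{-1} - 1. -/

import Mathlib

open Finset

namespace TsumAux

noncomputable def v (x : ℝ) (k : ℕ) : ℝ := 1 - x ^ k

noncomputable def u (x : ℝ) (n : ℕ) : ℝ := ∏ k ∈ Finset.range n, v x (k + 1)

variable {x : ℝ}

lemma v_pos (hx0 : 0 ≤ x) (hx1 : x < 1) (k : ℕ) : 0 < v x (k + 1) := by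
  have h : x ^ (k + 1) < 1 := pow_lt_one₀ hx0 hx1 (by omega)
  simp only [v]; linarith

lemma v_le_one (hx0 : 0 ≤ x) (k : ℕ) : v x k ≤ 1 := by
  have : 0 ≤ x ^ k := pow_nonneg hx0 k
  simp only [v]; linarith

lemma u_zero : u x 0 = 1 := by simp [u]

lemma u_succ (n : ℕ) : u x (n + 1) = u x n * v x (n + 1) := Finset.prod_range_succ _ _

lemma u_one : u x 1 = 1 - x := by simp [u, v]

lemma u_pos (hx0 : 0 ≤ x) (hx1 : x < 1) (n : ℕ) : 0 < u x n :=
  Finset.prod_pos fun k _ => v_pos hx0 hx1 k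

lemma u_le_one (hx0 : 0 ≤ x) (hx1 : x < 1) (n : ℕ) : u x n ≤ 1 :=
  Finset.prod_le_one (fun k _ => (v_pos hx0 hx1 k).le) (fun k _ => v_le_one hx0 (k + 1))

lemma u_anti (hx0 : 0 ≤ x) (hx1 : x < 1) : Antitone (u x) := by
  apply antitone_nat_of_succ_le
  intro n
  rw [u_succ]
  calc u x n * v x (n + 1) ≤ u x n * 1 :=
        mul_le_mul_of_nonneg_left (v_le_one hx0 (n + 1)) (u_pos hx0 hx1 n).le
    _ = u x n := mul_one _

noncomputable def Sf (x : ℝ) (N : ℕ) : ℝ :=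
  ∑ m ∈ range (N + 1), x ^ (m * (m + 1)) * u x (N + 1) / (u x m * u x (m + 1) * u x (N - m))

noncomputable def Tf (x : ℝ) (N : ℕ) : ℝ :=
  ∑ m ∈ range (N + 2), x ^ (m * m) * u x (N + 1) / (u x m * u x m * u x (N + 1 - m))

lemma term1 (hx0 : 0 < x) (hx1 : x < 1) (m j : ℕ) :
    x ^ (m * (m + 1)) * u x (m + j + 2) / (u x m * u x (m + 1) * u x (j + 1))
      = x ^ (m * (m + 1)) * u x (m + j + 1) / (u x m * u x (m + 1) * u x j)
        + x ^ (m + j + 1) *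
          (x ^ (m * m) * u x (m + j + 1) / (u x m * u x m * u x (j + 1))) := by
  have h2 : u x (m + j + 2) = u x (m + j + 1) * v x (m + j + 2) := u_succ (m + j + 1)
  have h1 : u x (j + 1) = u x j * v x (j + 1) := u_succ j
  have h3 : u x (m + 1) = u x m * v x (m + 1) := u_succ m
  have p1 : (0:ℝ) < u x m := u_pos hx0.le hx1 m
  have p2 : (0:ℝ) < u x j := u_pos hx0.le hx1 j
  have p3 : (0:ℝ) < u x (m + j + 1) := u_pos hx0.le hx1 _
  have q1 : (1:ℝ) - x ^ (m + 1) ≠ 0 := by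
    have h : x ^ (m + 1) < 1 := pow_lt_one₀ hx0.le hx1 (by omega); linarith
  have q2 : (1:ℝ) - x ^ (j + 1) ≠ 0 := by
    have h : x ^ (j + 1) < 1 := pow_lt_one₀ hx0.le hx1 (by omega); linarith
  rw [h2, h1, h3]
  simp only [v]
  field_simp
  ring

lemma term2 (hx0 : 0 < x) (hx1 : x < 1) (j i : ℕ) :
    x ^ ((j+1) * (j+1)) * u x (j+i+2) / (u x (j+1) * u x (j+1) * u x (i+1))
      = x ^ ((j+1) * (j+1)) * u x (j+i+1) / (u x (j+1) * u x (j+1) * u x i)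
        + x ^ (j+i+2) * (u x (j+i+1) / u x (j+i+2)) *
          (x ^ (j * (j+1)) * u x (j+i+2) / (u x j * u x (j+1) * u x (i+1))) := by
  have h2 : u x (j+i+2) = u x (j+i+1) * v x (j+i+2) := u_succ (j+i+1)
  have h1 : u x (i+1) = u x i * v x (i+1) := u_succ i
  have h3 : u x (j+1) = u x j * v x (j+1) := u_succ j
  have p1 : (0:ℝ) < u x j := u_pos hx0.le hx1 j
  have p2 : (0:ℝ) < u x i := u_pos hx0.le hx1 i
  have p3 : (0:ℝ) < u x (j+i+1) := u_pos hx0.le hx1 _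
  have q1 : (1:ℝ) - x ^ (j+1) ≠ 0 := by
    have h : x ^ (j+1) < 1 := pow_lt_one₀ hx0.le hx1 (by omega); linarith
  have q2 : (1:ℝ) - x ^ (i+1) ≠ 0 := by
    have h : x ^ (i+1) < 1 := pow_lt_one₀ hx0.le hx1 (by omega); linarith
  have q3 : (1:ℝ) - x ^ (j+i+2) ≠ 0 := by
    have h : x ^ (j+i+2) < 1 := pow_lt_one₀ hx0.le hx1 (by omega); linarith
  rw [h2, h1, h3]
  simp only [v]
  field_simp
  ring

lemma step1 (hx0 : 0 < x) (hx1 : x < 1) (N : ℕ) :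
    Sf x (N + 1) = Sf x N + x ^ (N + 1) * Tf x N := by
  have hup : (0:ℝ) < u x (N+1) := u_pos hx0.le hx1 _
  simp only [Sf, Tf]
  rw [Finset.sum_range_succ
    (f := fun m => x ^ (m * (m + 1)) * u x (N + 1 + 1) / (u x m * u x (m + 1) * u x (N + 1 - m))),
    Finset.sum_range_succ
    (f := fun m => x ^ (m * m) * u x (N + 1) / (u x m * u x m * u x (N + 1 - m)))]
  have key : ∀ m ∈ range (N + 1),
      x ^ (m * (m + 1)) * u x (N + 1 + 1) / (u x m * u x (m + 1) * u x (N + 1 - m))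
        = x ^ (m * (m + 1)) * u x (N + 1) / (u x m * u x (m + 1) * u x (N - m))
          + x ^ (N + 1) * (x ^ (m * m) * u x (N + 1) / (u x m * u x m * u x (N + 1 - m))) := by
    intro m hm
    obtain ⟨j, hj⟩ := Nat.le.dest (Nat.lt_succ_iff.mp (mem_range.mp hm))
    subst hj
    have e0 : m + j - m = j := by omega
    have e1 : m + j + 1 - m = j + 1 := by omega
    have e2 : m + j + 1 + 1 = m + j + 2 := by omega
    rw [e0, e1, e2]
    exact term1 hx0 hx1 m j
  rw [Finset.sum_congr rfl key, Finset.sum_add_distrib, ← Finset.mul_sum]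
  have bnd : x ^ ((N+1) * (N + 1 + 1)) * u x (N + 1 + 1) /
        (u x (N+1) * u x (N + 1 + 1) * u x (N + 1 - (N+1)))
      = x ^ (N + 1) * (x ^ ((N+1) * (N+1)) * u x (N + 1) /
        (u x (N+1) * u x (N+1) * u x (N + 1 - (N+1)))) := by
    have e : N + 1 - (N + 1) = 0 := by omega
    rw [e, u_zero]
    have h2 : (0:ℝ) < u x (N+2) := u_pos hx0.le hx1 _
    field_simp
    ring
  rw [bnd]
  ring

lemma step2 (hx0 : 0 < x) (hx1 : x < 1) (N : ℕ) :
    Tf x (N + 1) = Tf x N + x ^ (N + 2) * (u x (N + 1) / u x (N + 2)) * Sf x (N + 1) := by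
  simp only [Sf, Tf]
  rw [Finset.sum_range_succ'
    (f := fun m => x ^ (m * m) * u x (N + 1 + 1) / (u x m * u x m * u x (N + 1 + 1 - m))),
    Finset.sum_range_succ'
    (f := fun m => x ^ (m * m) * u x (N + 1) / (u x m * u x m * u x (N + 1 - m)))]
  -- peel last term of the (N+2)-range sums
  rw [Finset.sum_range_succ
    (f := fun j => x ^ ((j+1) * (j+1)) * u x (N + 1 + 1) /
      (u x (j+1) * u x (j+1) * u x (N + 1 + 1 - (j+1)))),
    Finset.sum_range_succ
    (f := fun m => x ^ (m * (m + 1)) * u x (N + 1 + 1) / (u x m * u x (m + 1) * u x (N + 1 - m)))]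
  have key : ∀ j ∈ range (N + 1),
      x ^ ((j+1) * (j+1)) * u x (N + 1 + 1) / (u x (j+1) * u x (j+1) * u x (N + 1 + 1 - (j+1)))
        = x ^ ((j+1) * (j+1)) * u x (N + 1) / (u x (j+1) * u x (j+1) * u x (N + 1 - (j+1)))
          + x ^ (N + 2) * (u x (N + 1) / u x (N + 2)) *
            (x ^ (j * (j + 1)) * u x (N + 1 + 1) / (u x j * u x (j+1) * u x (N + 1 - j))) := by
    intro j hj
    obtain ⟨i, hi⟩ := Nat.le.dest (Nat.lt_succ_iff.mp (mem_range.mp hj))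
    subst hi
    have e0 : j + i + 1 - (j + 1) = i := by omega
    have e1 : j + i + 1 + 1 - (j + 1) = i + 1 := by omega
    have e2 : j + i + 1 + 1 = j + i + 2 := by omega
    have e3 : j + i + 1 - j = i + 1 := by omega
    rw [e0, e1, e2, e3]
    exact term2 hx0 hx1 j i
  rw [Finset.sum_congr rfl key, Finset.sum_add_distrib, ← Finset.mul_sum]
  have bnd : x ^ ((N+1+1) * (N+1+1)) * u x (N + 1 + 1) /
        (u x (N+1+1) * u x (N+1+1) * u x (N + 1 + 1 - (N+1+1)))
      = x ^ (N + 2) * (u x (N + 1) / u x (N + 2)) *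
        (x ^ ((N+1) * (N + 1 + 1)) * u x (N + 1 + 1) /
          (u x (N+1) * u x (N+1+1) * u x (N + 1 - (N+1)))) := by
    have e : N + 1 + 1 - (N + 1 + 1) = 0 := by omega
    have e' : N + 1 - (N + 1) = 0 := by omega
    rw [e, e', u_zero]
    have h1 : (0:ℝ) < u x (N+1) := u_pos hx0.le hx1 _
    have h2 : (0:ℝ) < u x (N+1+1) := u_pos hx0.le hx1 _
    have h2' : (0:ℝ) < u x (N+2) := u_pos hx0.le hx1 _
    have e2 : N + 1 + 1 = N + 2 := by omega
    rw [e2]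
    field_simp
    ring
  rw [bnd]
  have ezero :
      x ^ (0 * 0) * u x (N + 1 + 1) / (u x 0 * u x 0 * u x (N + 1 + 1 - 0))
        = x ^ (0 * 0) * u x (N + 1) / (u x 0 * u x 0 * u x (N + 1 - 0)) := by
    simp only [Nat.sub_zero, u_zero, pow_zero, Nat.zero_mul, one_mul, mul_one]
    rw [div_self (u_pos hx0.le hx1 (N+1+1)).ne', div_self (u_pos hx0.le hx1 (N+1)).ne']
  rw [ezero]
  ring

lemma ST (hx0 : 0 < x) (hx1 : x < 1) :
    ∀ N, Sf x N = (u x N)⁻¹ ∧ Tf x N = (u x (N + 1))⁻¹ := by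
  intro N
  induction N with
  | zero =>
    constructor
    · norm_num [Sf, Finset.sum_range_one, u_zero]
      exact (u_pos hx0.le hx1 _).ne'
    · have h1 : u x 1 = 1 - x := u_one
      have hne : (1:ℝ) - x ≠ 0 := by linarith
      simp only [Tf, Finset.sum_range_succ, Finset.sum_range_one, Nat.zero_mul, pow_zero,
        u_zero, Nat.sub_zero, one_mul, mul_one, Nat.one_mul, pow_one, h1]
      rw [u_zero]
      field_simp
      simp only [Finset.sum_range_zero]; ring
  | succ N ih =>
    obtain ⟨hS, hT⟩ := ih
    have hu1 : (0:ℝ) < u x (N + 1) := u_pos hx0.le hx1 _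
    have hu0 : (0:ℝ) < u x N := u_pos hx0.le hx1 _
    have hu2 : (0:ℝ) < u x (N + 2) := u_pos hx0.le hx1 _
    have hv1 : u x (N + 1) = u x N * v x (N + 1) := u_succ N
    have hv2 : u x (N + 2) = u x (N + 1) * v x (N + 2) := u_succ (N + 1)
    have hq1 : (1:ℝ) - x ^ (N + 1) ≠ 0 := by
      have h : x ^ (N + 1) < 1 := pow_lt_one₀ hx0.le hx1 (by omega); linarith
    have hq2 : (1:ℝ) - x ^ (N + 2) ≠ 0 := by
      have h : x ^ (N + 2) < 1 := pow_lt_one₀ hx0.le hx1 (by omega); linarith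
    have hSnew : Sf x (N + 1) = (u x (N + 1))⁻¹ := by
      rw [step1 hx0 hx1 N, hS, hT, hv1]
      simp only [v]
      rw [hv1] at hu1
      simp only [v] at hu1
      field_simp
      ring
    refine ⟨hSnew, ?_⟩
    rw [step2 hx0 hx1 N, hT, hSnew, hv2]
    simp only [v]
    field_simp
    ring


theorem aux (hx0 : 0 < x) (hx1 : x < 1) (l : ℕ → ℝ)
    (hodd : ∀ m : ℕ, l (2*m+1) = (1-x) * x^((m+1)*(m+2)) / (u x (m+1))^2)
    (heven : ∀ m : ℕ, l (2*m+2) = (1-x) * x^((m+2)*(m+2)) / (u x (m+1) * u x (m+2))) :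
    Summable (fun n : ℕ => l (n+1)) ∧
      (∑' n : ℕ, l (n+1)) = (∏' k : ℕ, v x (k+2))⁻¹ - 1 := by
  have h1x : (0:ℝ) < 1 - x := by linarith
  -- partial sums in pairs
  have hA : ∀ M : ℕ, 1 + (∑ i ∈ range (2*M), l (i+1))
      = ∑ m ∈ range (M+1), (1-x) * x^(m*(m+1)) / (u x m * u x (m+1)) := by
    intro M
    induction M with
    | zero =>
      norm_num [u_zero, u_one]
      exact (div_self (by linarith : (1:ℝ) - x ≠ 0)).symm
    | succ M ih =>
      have e : 2*(M+1) = 2*M+1+1 := by omega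
      rw [e, Finset.sum_range_succ, Finset.sum_range_succ,
        Finset.sum_range_succ (n := M+1)]
      have e1 : 2*M+1+1 = 2*M+2 := by omega
      rw [e1]
      have hpair : l (2*M+1) + l (2*M+2)
          = (1-x) * x^((M+1)*(M+1+1)) / (u x (M+1) * u x (M+1+1)) := by
        rw [hodd M, heven M, u_succ (M+1)]
        have p1 : (0:ℝ) < u x (M+1) := u_pos hx0.le hx1 _
        have q1 : (1:ℝ) - x ^ (M+2) ≠ 0 := by
          have h : x ^ (M+2) < 1 := pow_lt_one₀ hx0.le hx1 (by omega); linarith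
        simp only [v]
        field_simp
        ring
      linarith
  -- positivity of terms
  have hlpos : ∀ n : ℕ, 0 < l (n+1) := by
    intro n
    rcases Nat.even_or_odd n with ⟨m, hm⟩ | ⟨m, hm⟩
    · have e : n + 1 = 2*m + 1 := by omega
      rw [e, hodd m]
      exact div_pos (mul_pos h1x (pow_pos hx0 _)) (pow_pos (u_pos hx0.le hx1 _) 2)
    · have e : n + 1 = 2*m + 2 := by omega
      rw [e, heven m]
      exact div_pos (mul_pos h1x (pow_pos hx0 _))
        (mul_pos (u_pos hx0.le hx1 _) (u_pos hx0.le hx1 _))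
  -- lower bound
  have hlow : ∀ M : ℕ, (1-x) / u x M ≤ 1 + (∑ i ∈ range (2*M), l (i+1)) := by
    intro M
    rw [hA M]
    have hSfM : Sf x M = (u x M)⁻¹ := (ST hx0 hx1 M).1
    have e : (1-x) / u x M = ∑ m ∈ range (M+1),
        (1-x) * (x ^ (m * (m + 1)) * u x (M + 1) / (u x m * u x (m + 1) * u x (M - m))) := by
      rw [← Finset.mul_sum]
      show (1-x) / u x M = (1-x) * Sf x M
      rw [hSfM, div_eq_mul_inv]
    rw [e]
    apply Finset.sum_le_sum
    intro m hm
    have pa : (0:ℝ) < u x m := u_pos hx0.le hx1 _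
    have pb : (0:ℝ) < u x (m+1) := u_pos hx0.le hx1 _
    have pc : (0:ℝ) < u x (M-m) := u_pos hx0.le hx1 _
    have hanti : u x (M+1) ≤ u x (M-m) := u_anti hx0.le hx1 (by omega)
    have eL : (1-x) * (x ^ (m * (m + 1)) * u x (M + 1) / (u x m * u x (m + 1) * u x (M - m)))
        = ((1-x) * x ^ (m * (m + 1)) / (u x m * u x (m + 1))) * (u x (M+1) / u x (M-m)) := by
      field_simp
    rw [eL]
    have hle1 : u x (M+1) / u x (M-m) ≤ 1 := (div_le_one pc).mpr hanti
    have hnn : (0:ℝ) ≤ (1-x) * x ^ (m * (m + 1)) / (u x m * u x (m + 1)) := by positivity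
    simpa using mul_le_mul_of_nonneg_left hle1 hnn
  -- upper bound
  have hup : ∀ M : ℕ, 1 + (∑ i ∈ range (2*M), l (i+1))
      ≤ (1-x) * u x M / (u x (2*M+1) * u x (2*M)) := by
    intro M
    rw [hA M]
    have hSf2M : Sf x (2*M) = (u x (2*M))⁻¹ := (ST hx0 hx1 (2*M)).1
    have p2M1 : (0:ℝ) < u x (2*M+1) := u_pos hx0.le hx1 _
    have p2M : (0:ℝ) < u x (2*M) := u_pos hx0.le hx1 _
    have pM : (0:ℝ) < u x M := u_pos hx0.le hx1 _
    calc ∑ m ∈ range (M+1), (1-x) * x^(m*(m+1)) / (u x m * u x (m+1))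
        ≤ ∑ m ∈ range (M+1), (u x M / u x (2*M+1)) *
            ((1-x) * (x ^ (m * (m + 1)) * u x (2*M + 1) /
              (u x m * u x (m + 1) * u x (2*M - m)))) := by
          apply Finset.sum_le_sum
          intro m hm
          have hmM : m ≤ M := Nat.lt_succ_iff.mp (mem_range.mp hm)
          have pa : (0:ℝ) < u x m := u_pos hx0.le hx1 _
          have pb : (0:ℝ) < u x (m+1) := u_pos hx0.le hx1 _
          have pc : (0:ℝ) < u x (2*M-m) := u_pos hx0.le hx1 _
          have hanti : u x (2*M-m) ≤ u x M := u_anti hx0.le hx1 (by omega)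
          have eL : (1-x) * x^(m*(m+1)) / (u x m * u x (m+1))
              = ((1-x) * x ^ (m*(m+1)) / (u x m * u x (m+1) * u x (2*M-m))) * u x (2*M-m) := by
            field_simp
          have eR : (u x M / u x (2*M+1)) *
              ((1-x) * (x ^ (m * (m + 1)) * u x (2*M + 1) /
                (u x m * u x (m + 1) * u x (2*M - m))))
              = ((1-x) * x ^ (m*(m+1)) / (u x m * u x (m+1) * u x (2*M-m))) * u x M := by
            field_simp
          rw [eL, eR]
          apply mul_le_mul_of_nonneg_left hanti
          positivity
      _ ≤ ∑ m ∈ range (2*M+1), (u x M / u x (2*M+1)) *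
            ((1-x) * (x ^ (m * (m + 1)) * u x (2*M + 1) /
              (u x m * u x (m + 1) * u x (2*M - m)))) := by
          apply Finset.sum_le_sum_of_subset_of_nonneg
          · exact Finset.range_subset_range.mpr (by omega)
          · intro m _ _
            have pa : (0:ℝ) < u x m := u_pos hx0.le hx1 _
            have pb : (0:ℝ) < u x (m+1) := u_pos hx0.le hx1 _
            have pc : (0:ℝ) < u x (2*M-m) := u_pos hx0.le hx1 _
            positivity
      _ = (u x M / u x (2*M+1)) * ((1-x) * Sf x (2*M)) := by
          rw [Sf, Finset.mul_sum, Finset.mul_sum]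
      _ = (1-x) * u x M / (u x (2*M+1) * u x (2*M)) := by
          rw [hSf2M]
          field_simp
  -- the infinite product
  set Kc : ℝ := x^2/((1-x)*(1-x^2)) with hKc
  have hx2 : (0:ℝ) < 1 - x^2 := by nlinarith
  have hkey : ∀ s : Finset ℕ, Real.exp (-Kc) ≤ ∏ i ∈ s, v x (i+2) := by
    intro s
    have hlog : ∀ i ∈ s, -(x^(i+2)/(1-x^2)) ≤ Real.log (v x (i+2)) := by
      intro i _
      have ht1 : x^(i+2) < 1 := pow_lt_one₀ hx0.le hx1 (by omega)
      have ht0 : (0:ℝ) < x^(i+2) := pow_pos hx0 _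
      have hv : 0 < v x (i+2) := v_pos hx0.le hx1 (i+1)
      have h := Real.one_sub_inv_le_log_of_pos hv
      refine le_trans ?_ h
      have e : (1:ℝ) - (v x (i+2))⁻¹ = -(x^(i+2)/(1 - x^(i+2))) := by
        simp only [v]
        have : (1:ℝ) - x^(i+2) ≠ 0 := by simpa [v] using hv.ne'
        field_simp
        ring
      rw [e, neg_le_neg_iff]
      have hle : (1:ℝ) - x^2 ≤ 1 - x^(i+2) := by
        have : x^(i+2) ≤ x^2 := pow_le_pow_of_le_one hx0.le hx1.le (by omega)
        linarith
      exact div_le_div_of_nonneg_left ht0.le hx2 hle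
    have hsum : ∑ i ∈ s, x^(i+2) ≤ x^2/(1-x) := by
      have e : ∀ i ∈ s, x^(i+2) = x^2 * x^i := by
        intro i _; rw [← pow_add]; ring_nf
      rw [Finset.sum_congr rfl e, ← Finset.mul_sum]
      have h1 : ∑ i ∈ s, x^i ≤ ∑' i : ℕ, x^i :=
        (summable_geometric_of_lt_one hx0.le hx1).sum_le_tsum s (fun i _ => (pow_pos hx0 i).le)
      have h2 : ∑' i : ℕ, x^i = (1-x)⁻¹ := tsum_geometric_of_lt_one hx0.le hx1
      rw [div_eq_mul_inv, ← h2]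
      exact mul_le_mul_of_nonneg_left h1 (by positivity)
    have hlogsum : -Kc ≤ ∑ i ∈ s, Real.log (v x (i+2)) := by
      have h1 : ∑ i ∈ s, -(x^(i+2)/(1-x^2)) ≤ ∑ i ∈ s, Real.log (v x (i+2)) :=
        Finset.sum_le_sum hlog
      refine le_trans ?_ h1
      rw [Finset.sum_neg_distrib, neg_le_neg_iff, ← Finset.sum_div, hKc, ← div_div]
      exact (div_le_div_iff_of_pos_right hx2).mpr hsum
    calc Real.exp (-Kc) ≤ Real.exp (∑ i ∈ s, Real.log (v x (i+2))) :=
          Real.exp_le_exp.mpr hlogsum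
      _ = ∏ i ∈ s, v x (i+2) := by
          rw [Real.exp_sum]
          exact Finset.prod_congr rfl fun i _ => Real.exp_log (v_pos hx0.le hx1 (i+1))
  have hanti2 : Antitone (fun s : Finset ℕ => ∏ i ∈ s, v x (i+2)) := by
    intro s t hst
    dsimp only
    rw [← Finset.prod_sdiff hst]
    exact mul_le_of_le_one_left (Finset.prod_nonneg fun i _ => (v_pos hx0.le hx1 (i+1)).le)
      (Finset.prod_le_one (fun i _ => (v_pos hx0.le hx1 (i+1)).le)
        (fun i _ => v_le_one hx0.le (i+2)))
  have hbdd : BddBelow (Set.range fun s : Finset ℕ => ∏ i ∈ s, v x (i+2)) := by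
    refine ⟨Real.exp (-Kc), ?_⟩
    rintro y ⟨s, rfl⟩
    exact hkey s
  set P : ℝ := ⨅ s : Finset ℕ, ∏ i ∈ s, v x (i+2) with hPdef
  have hProd : HasProd (fun k : ℕ => v x (k+2)) P := tendsto_atTop_ciInf hanti2 hbdd
  have hPlb : Real.exp (-Kc) ≤ P := le_ciInf fun s => hkey s
  have hPpos : 0 < P := lt_of_lt_of_le (Real.exp_pos _) hPlb
  have htprod : (∏' k : ℕ, v x (k+2)) = P := hProd.tprod_eq
  have hQ : Filter.Tendsto (fun n : ℕ => ∏ i ∈ range n, v x (i+2))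
      Filter.atTop (nhds P) := hProd.tendsto_prod_nat
  have hu_eq : ∀ n : ℕ, u x (n+1) = (1-x) * ∏ i ∈ range n, v x (i+2) := by
    intro n
    induction n with
    | zero => simp [u_one]
    | succ n ih =>
      rw [u_succ (n+1), ih, Finset.prod_range_succ]
      have e : n + 1 + 1 = n + 2 := by omega
      rw [e]
      ring
  have huT : Filter.Tendsto (u x) Filter.atTop (nhds ((1-x) * P)) := by
    have h1 : Filter.Tendsto (fun n : ℕ => u x (n+1)) Filter.atTop (nhds ((1-x) * P)) := by
      simp only [hu_eq]
      exact hQ.const_mul (1-x)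
    exact (Filter.tendsto_add_atTop_iff_nat 1).mp h1
  have hne : (1-x) * P ≠ 0 := by positivity
  have hlowlim : Filter.Tendsto (fun M : ℕ => (1-x) / u x M) Filter.atTop (nhds P⁻¹) := by
    have h := ((tendsto_const_nhds : Filter.Tendsto (fun _ : ℕ => (1-x)) Filter.atTop (nhds (1-x)))).div huT hne
    have e : (1-x) / ((1-x) * P) = P⁻¹ := by field_simp
    rw [e] at h
    exact h
  have h2M1 : Filter.Tendsto (fun M : ℕ => u x (2*M+1)) Filter.atTop (nhds ((1-x)*P)) :=
    huT.comp (Filter.tendsto_atTop_mono (fun n => by omega : ∀ n : ℕ, n ≤ 2*n+1) Filter.tendsto_id)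
  have h2M : Filter.Tendsto (fun M : ℕ => u x (2*M)) Filter.atTop (nhds ((1-x)*P)) :=
    huT.comp (Filter.tendsto_atTop_mono (fun n => by omega : ∀ n : ℕ, n ≤ 2*n) Filter.tendsto_id)
  have huplim : Filter.Tendsto (fun M : ℕ => (1-x) * u x M / (u x (2*M+1) * u x (2*M)))
      Filter.atTop (nhds P⁻¹) := by
    have h := (((tendsto_const_nhds :
      Filter.Tendsto (fun _ : ℕ => (1-x)) Filter.atTop (nhds (1-x)))).mul huT).div
      (h2M1.mul h2M) (by positivity)
    have e : (1-x) * ((1-x) * P) / ((1-x) * P * ((1-x) * P)) = P⁻¹ := by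
      field_simp
    rw [e] at h
    exact h
  have hsq : Filter.Tendsto (fun M : ℕ => 1 + ∑ i ∈ range (2*M), l (i+1))
      Filter.atTop (nhds P⁻¹) :=
    tendsto_of_tendsto_of_tendsto_of_le_of_le hlowlim huplim hlow hup
  have hDlim : Filter.Tendsto (fun M : ℕ => ∑ i ∈ range (2*M), l (i+1))
      Filter.atTop (nhds (P⁻¹ - 1)) := by
    have h := hsq.sub_const 1
    simpa using h
  -- summability
  have hulb : ∀ n : ℕ, (1-x) * Real.exp (-Kc) ≤ u x n := by
    intro n
    match n with
    | 0 =>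
      rw [u_zero]
      have h1 : Real.exp (-Kc) ≤ 1 := Real.exp_le_one_iff.mpr (by positivity |> neg_nonpos_of_nonneg)
      nlinarith [Real.exp_pos (-Kc)]
    | (n+1) =>
      rw [hu_eq n]
      exact mul_le_mul_of_nonneg_left (hkey (range n)) h1x.le
  have hbound : ∀ N : ℕ, ∑ i ∈ range N, l (i+1) ≤ (1-x) / ((1-x) * Real.exp (-Kc))^2 := by
    intro N
    have hmono : ∑ i ∈ range N, l (i+1) ≤ ∑ i ∈ range (2*N), l (i+1) :=
      Finset.sum_le_sum_of_subset_of_nonneg (Finset.range_subset_range.mpr (by omega))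
        (fun i _ _ => (hlpos i).le)
    have hupN := hup N
    have heps : (0:ℝ) < (1-x) * Real.exp (-Kc) := by positivity
    have hfin : (1-x) * u x N / (u x (2*N+1) * u x (2*N))
        ≤ (1-x) / ((1-x) * Real.exp (-Kc))^2 := by
      apply div_le_div₀ (by positivity)
      · nlinarith [u_le_one hx0.le hx1 N]
      · positivity
      · rw [sq]
        exact mul_le_mul (hulb (2*N+1)) (hulb (2*N)) heps.le (u_pos hx0.le hx1 _).le
    linarith
  have hsumm : Summable (fun n : ℕ => l (n+1)) :=
    summable_of_sum_range_le (fun n => (hlpos n).le) hbound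
  refine ⟨hsumm, ?_⟩
  have htend : Filter.Tendsto (fun N : ℕ => ∑ i ∈ range N, l (i+1))
      Filter.atTop (nhds (∑' n : ℕ, l (n+1))) := hsumm.hasSum.tendsto_sum_nat
  have hsub : Filter.Tendsto (fun M : ℕ => ∑ i ∈ range (2*M), l (i+1))
      Filter.atTop (nhds (∑' n : ℕ, l (n+1))) :=
    htend.comp (Filter.tendsto_atTop_mono (fun n => by omega : ∀ n : ℕ, n ≤ 2*n) Filter.tendsto_id)
  rw [htprod]
  exact tendsto_nhds_unique hsub hDlim

end TsumAux


/-- For `p > 1` and `λ` defined by `λ 1 = 1/(p(p-1))`,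
`λ n = λ (n-1) / (p^(⌊n/2⌋+1) - 1)` for `n ≥ 2`, the series `∑_{n≥1} λ n`
converges and equals `(∏_{k≥2} (1 - p^{-k}))⁻¹ - 1`. -/
theorem tsum_lambda_eq (p : ℝ) (hp : 1 < p)
    (l : ℕ → ℝ) (h1 : l 1 = 1 / (p * (p - 1)))
    (hrec : ∀ n, 2 ≤ n → l n = l (n - 1) / (p ^ (n / 2 + 1) - 1)) :
    Summable (fun n : ℕ => l (n + 1)) ∧
    (∑' n : ℕ, l (n + 1)) = (∏' k : ℕ, (1 - (p ^ (k + 2))⁻¹))⁻¹ - 1 := by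
  have hp0 : 0 < p := by linarith
  have hp1 : p - 1 ≠ 0 := by linarith
  set x : ℝ := p⁻¹ with hxdef
  have hx0 : 0 < x := inv_pos.mpr hp0
  have hx1 : x < 1 := by
    rw [hxdef]
    exact inv_lt_one_of_one_lt₀ hp
  have h1x : (0:ℝ) < 1 - x := by linarith
  have hpow : ∀ j : ℕ, p ^ j - 1 = TsumAux.v x j / x ^ j := by
    intro j
    have e1 : x ^ j = (p ^ j)⁻¹ := by rw [hxdef, inv_pow]
    have hpj : p ^ j ≠ 0 := by positivity
    rw [TsumAux.v, e1]
    field_simp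
  have hvne : ∀ j : ℕ, (1:ℝ) - x ^ (j+1) ≠ 0 := by
    intro j
    have h : x ^ (j+1) < 1 := pow_lt_one₀ hx0.le hx1 (by omega)
    linarith
  have hclosed : ∀ m : ℕ,
      l (2*m+1) = (1-x) * x^((m+1)*(m+2)) / (TsumAux.u x (m+1))^2
      ∧ l (2*m+2) = (1-x) * x^((m+2)*(m+2)) / (TsumAux.u x (m+1) * TsumAux.u x (m+2)) := by
    intro m
    induction m with
    | zero =>
      have hl1 : l 1 = (1-x) * x^((0+1)*(0+2)) / (TsumAux.u x (0+1))^2 := by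
        rw [h1, TsumAux.u_one, hxdef]
        field_simp
        ring
        rw [← mul_pow, mul_inv_cancel₀ hp0.ne', one_pow]
      refine ⟨hl1, ?_⟩
      have h2 := hrec 2 (by omega)
      norm_num at h2
      rw [h2, hpow 2]
      have hl1' : l 1 = (1-x) * x^2 / (1-x)^2 := by
        have := hl1
        rwa [TsumAux.u_one] at this
      rw [hl1', TsumAux.u_succ 1, TsumAux.u_one, TsumAux.v]
      have hne2 : (1:ℝ) - x^2 ≠ 0 := hvne 1
      field_simp
    | succ m ih =>
      obtain ⟨ho, he⟩ := ih
      have h3 := hrec (2*m+3) (by omega)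
      have e1 : 2*m+3-1 = 2*m+2 := by omega
      have e2 : (2*m+3)/2+1 = m+2 := by omega
      rw [e1, e2] at h3
      have h4 := hrec (2*m+4) (by omega)
      have e3 : 2*m+4-1 = 2*m+3 := by omega
      have e4 : (2*m+4)/2+1 = m+3 := by omega
      rw [e3, e4] at h4
      have pu1 : (0:ℝ) < TsumAux.u x (m+1) := TsumAux.u_pos hx0.le hx1 _
      have pu2 : (0:ℝ) < TsumAux.u x (m+2) := TsumAux.u_pos hx0.le hx1 _
      have hodd_new : l (2*m+3) = (1-x) * x^((m+2)*(m+3)) / (TsumAux.u x (m+2))^2 := by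
        rw [h3, he, hpow (m+2), TsumAux.u_succ (m+1), TsumAux.v]
        have := hvne (m+1)
        field_simp
        ring
      constructor
      · rw [show 2*(m+1)+1 = 2*m+3 from by omega]
        rw [show (m+1)+1 = m+2 from by omega, show (m+1)+2 = m+3 from by omega]
        exact hodd_new
      · rw [show 2*(m+1)+2 = 2*m+4 from by omega]
        rw [show (m+1)+1 = m+2 from by omega, show (m+1)+2 = m+3 from by omega]
        rw [h4, hodd_new, hpow (m+3), TsumAux.u_succ (m+2), TsumAux.v]
        have := hvne (m+2)
        field_simp
        ring
  have hres := TsumAux.aux hx0 hx1 l (fun m => (hclosed m).1) (fun m => (hclosed m).2)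
  have hfun : (fun k : ℕ => (1:ℝ) - (p ^ (k + 2))⁻¹) = fun k : ℕ => TsumAux.v x (k+2) := by
    funext k
    rw [TsumAux.v, hxdef, inv_pow]
  rw [hfun]
  exact hres
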